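/- Let 0 < α ≤ π/4 and R > 0, and let W := {w ∈ ℂ : |w| > R and |arg w| < α}. Let f : W → ℂ satisfy |f(w) − w − 1| ≤ sin α for all w ∈ W. Then: (i) f(W) ⊆ W, so all iterates f^{∘n} are defined on W; (ii) |f^{∘n}(w) − w − n| ≤ n·sin α for all n ∈ ℕ and w ∈ W; (iii) |f^{∘n}(w)| ≥ (1 − sin α)·n for all n ≥ 1 and w ∈ W. -/

import Mathlib

open Set Complex

/-- Characterization of the open sector `|arg z| < α` in real coordinates. -/
lemma stmt12_sector_iff {α : ℝ} (hα : 0 < α) (hα2 : α < Real.pi / 2) {z : ℂ}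
    (hz : z ≠ 0) :
    |Complex.arg z| < α ↔ |z.im| * Real.cos α < z.re * Real.sin α := by
  have hπ := Real.pi_pos
  have hzpos : 0 < ‖z‖ := norm_pos_iff.mpr hz
  have hre : z.re = ‖z‖ * Real.cos (Complex.arg z) := by
    rw [Complex.cos_arg hz]; field_simp
  have him : z.im = ‖z‖ * Real.sin (Complex.arg z) := by
    rw [Complex.sin_arg]; field_simp
  have hsinα : 0 < Real.sin α := Real.sin_pos_of_pos_of_lt_pi hα (by linarith)
  set θ := Complex.arg z with hθdef
  have hθ1 : -Real.pi < θ := Complex.neg_pi_lt_arg z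
  have hθ2 : θ ≤ Real.pi := Complex.arg_le_pi z
  have key : |θ| < α ↔ |Real.sin θ| * Real.cos α < Real.cos θ * Real.sin α := by
    constructor
    · intro h
      have hsabs : |Real.sin θ| = Real.sin |θ| := by
        rcases abs_cases θ with ⟨h1, h2⟩ | ⟨h1, h2⟩
        · rw [h1, _root_.abs_of_nonneg (Real.sin_nonneg_of_nonneg_of_le_pi h2 (by linarith))]
        · rw [h1, Real.sin_neg, abs_of_nonpos]
          exact Real.sin_nonpos_of_nonpos_of_neg_pi_le (le_of_lt h2) (by linarith)
      have hpos : 0 < Real.sin (α - |θ|) :=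
        Real.sin_pos_of_pos_of_lt_pi (by linarith [abs_nonneg θ]) (by linarith [abs_nonneg θ])
      rw [Real.sin_sub] at hpos
      rw [hsabs, ← Real.cos_abs θ]
      nlinarith
    · intro h
      have hcosθ : 0 < Real.cos θ := by
        nlinarith [abs_nonneg (Real.sin θ), Real.cos_pos_of_mem_Ioo
          (show α ∈ Set.Ioo (-(Real.pi/2)) (Real.pi/2) from ⟨by linarith, hα2⟩)]
      have hθlt : |θ| < Real.pi / 2 := by
        rw [abs_lt]
        constructor
        · by_contra hc
          push_neg at hc
          have : Real.cos θ ≤ 0 := by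
            rw [← Real.cos_neg]
            exact Real.cos_nonpos_of_pi_div_two_le_of_le (by linarith) (by linarith)
          linarith
        · by_contra hc
          push_neg at hc
          have : Real.cos θ ≤ 0 :=
            Real.cos_nonpos_of_pi_div_two_le_of_le hc (by linarith)
          linarith
      have hsabs : |Real.sin θ| = Real.sin |θ| := by
        rcases abs_cases θ with ⟨h1, h2⟩ | ⟨h1, h2⟩
        · rw [h1, _root_.abs_of_nonneg (Real.sin_nonneg_of_nonneg_of_le_pi h2 (by linarith))]
        · rw [h1, Real.sin_neg, abs_of_nonpos]
          exact Real.sin_nonpos_of_nonpos_of_neg_pi_le (le_of_lt h2) (by linarith)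
      by_contra hc
      push_neg at hc
      have hle : Real.sin (α - |θ|) ≤ 0 :=
        Real.sin_nonpos_of_nonpos_of_neg_pi_le (by linarith) (by linarith [abs_nonneg θ])
      rw [Real.sin_sub] at hle
      rw [hsabs, ← Real.cos_abs θ] at h
      nlinarith
  rw [key, him, hre, abs_mul, abs_of_pos hzpos]
  constructor
  · intro h; nlinarith
  · intro h; nlinarith

set_option maxHeartbeats 1000000 in
/-- STATEMENT 12: let `0 < α ≤ π/4`, `R > 0` and let `W` be the sector
`{w : |w| > R, |arg w| < α}`.  If `f : W → ℂ` satisfies `|f w − w − 1| ≤ sin α` on `W`,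
then (i) `W` is `f`-invariant; (ii) `|f^[n] w − w − n| ≤ n sin α` on `W`;
(iii) `|f^[n] w| ≥ (1 − sin α) n` for `n ≥ 1` and `w ∈ W`. -/
theorem stmt12 (α R : ℝ) (hα : 0 < α) (hαle : α ≤ Real.pi / 4) (hR : 0 < R)
    (f : ℂ → ℂ)
    (hf : ∀ w : ℂ, R < ‖w‖ → |Complex.arg w| < α →
      ‖f w - w - 1‖ ≤ Real.sin α) :
    (MapsTo f {w : ℂ | R < ‖w‖ ∧ |Complex.arg w| < α}
      {w : ℂ | R < ‖w‖ ∧ |Complex.arg w| < α}) ∧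
    (∀ n : ℕ, ∀ w : ℂ, R < ‖w‖ → |Complex.arg w| < α →
      ‖f^[n] w - w - (n : ℂ)‖ ≤ (n : ℝ) * Real.sin α) ∧
    (∀ n : ℕ, 1 ≤ n → ∀ w : ℂ, R < ‖w‖ → |Complex.arg w| < α →
      (1 - Real.sin α) * (n : ℝ) ≤ ‖f^[n] w‖) := by
  have hπ := Real.pi_pos
  have hα2 : α < Real.pi / 2 := by linarith
  have hsinα : 0 < Real.sin α := Real.sin_pos_of_pos_of_lt_pi hα (by linarith)
  have hcosα : 0 < Real.cos α :=
    Real.cos_pos_of_mem_Ioo ⟨by linarith, hα2⟩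
  have hpyth := Real.sin_sq_add_cos_sq α
  have hsin1 : Real.sin α < 1 := by nlinarith
  have hsc : Real.sin α ≤ Real.cos α := by
    rw [← Real.sin_pi_div_two_sub]
    exact Real.sin_le_sin_of_le_of_le_pi_div_two (by linarith) (by linarith) (by linarith)
  -- main invariance step
  have main : ∀ w : ℂ, R < ‖w‖ → |Complex.arg w| < α →
      ‖w‖ < ‖f w‖ ∧ |Complex.arg (f w)| < α := by
    intro w hwR hwarg
    have hw0 : w ≠ 0 := by
      intro h; rw [h] at hwR; simp at hwR; linarith
    have hsect := (stmt12_sector_iff hα hα2 hw0).mp hwarg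
    have hwre : 0 < w.re := by nlinarith [abs_nonneg w.im]
    obtain ⟨h, hfw⟩ : ∃ h : ℂ, f w = w + 1 + h := ⟨f w - w - 1, by ring⟩
    have hhdef : f w - w - 1 = h := by rw [hfw]; ring
    have hhle : ‖h‖ ≤ Real.sin α := hhdef ▸ hf w hwR hwarg
    have hsq : h.re ^ 2 + h.im ^ 2 ≤ Real.sin α ^ 2 := by
      have h1 := Complex.sq_norm h
      rw [Complex.normSq_apply] at h1
      nlinarith [norm_nonneg h]
    have hrecos : ‖w‖ * Real.cos α ≤ w.re := by
      have hc := Complex.cos_arg hw0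
      have hcosarg : Real.cos α ≤ Real.cos (Complex.arg w) := by
        rw [← Real.cos_abs (Complex.arg w)]
        exact Real.cos_le_cos_of_nonneg_of_le_pi (abs_nonneg _) (by linarith) hwarg.le
      have hwpos : 0 < ‖w‖ := by linarith
      have : w.re = ‖w‖ * Real.cos (Complex.arg w) := by
        rw [hc]; field_simp
      rw [this]
      exact mul_le_mul_of_nonneg_left hcosarg (le_of_lt hwpos)
    -- |f w| > |w|
    have habs : ‖w‖ < ‖f w‖ := by
      have h1 : ‖w‖ + Real.sin α < ‖w + 1‖ := by
        have hsq1 : ‖w + 1‖ ^ 2 = ‖w‖ ^ 2 + 2 * w.re + 1 := by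
          rw [Complex.sq_norm, Complex.sq_norm, Complex.normSq_apply, Complex.normSq_apply]
          simp
          ring
        have hwpos : 0 < ‖w‖ := by linarith
        have hlt : (‖w‖ + Real.sin α) ^ 2 < ‖w + 1‖ ^ 2 := by
          rw [hsq1]; nlinarith
        exact lt_of_pow_lt_pow_left₀ 2 (norm_nonneg _) hlt
      have h2 : ‖w + 1‖ - ‖f w‖ ≤ ‖h‖ := by
        have := norm_sub_norm_le (w + 1) (f w)
        have heq : w + 1 - f w = -h := by rw [hfw]; ring
        rw [heq, norm_neg] at this
        linarith
      linarith
    refine ⟨habs, ?_⟩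
    -- argument bound
    have hfw0 : f w ≠ 0 := by
      intro hz; rw [hz] at habs; simp at habs
      exact absurd habs (not_lt.mpr (norm_nonneg w))
    rw [stmt12_sector_iff hα hα2 hfw0]
    have hfre : (f w).re = w.re + 1 + h.re := by rw [hfw]; simp
    have hfim : (f w).im = w.im + h.im := by rw [hfw]; simp
    -- rotated bounds on h
    have hB1 : h.im * Real.cos α - h.re * Real.sin α ≤ Real.sin α := by
      nlinarith [sq_nonneg (h.im * Real.sin α + h.re * Real.cos α)]
    have hB2 : -(h.im * Real.cos α) - h.re * Real.sin α ≤ Real.sin α := by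
      nlinarith [sq_nonneg (h.im * Real.sin α - h.re * Real.cos α)]
    have hw1 : w.im * Real.cos α - w.re * Real.sin α < 0 := by
      nlinarith [le_abs_self w.im]
    have hw2 : -(w.im * Real.cos α) - w.re * Real.sin α < 0 := by
      nlinarith [neg_abs_le w.im]
    rcases abs_cases (f w).im with ⟨he, _⟩ | ⟨he, _⟩ <;> rw [he, hfre, hfim] <;> nlinarith
  have hmaps : MapsTo f {w : ℂ | R < ‖w‖ ∧ |Complex.arg w| < α}
      {w : ℂ | R < ‖w‖ ∧ |Complex.arg w| < α} := by
    intro w hw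
    obtain ⟨h1, h2⟩ := main w hw.1 hw.2
    exact ⟨lt_trans hw.1 h1, h2⟩
  have hiter : ∀ n : ℕ, ∀ w : ℂ, R < ‖w‖ → |Complex.arg w| < α →
      R < ‖f^[n] w‖ ∧ |Complex.arg (f^[n] w)| < α := by
    intro n
    induction n with
    | zero => intro w h1 h2; simpa using ⟨h1, h2⟩
    | succ n ih =>
      intro w h1 h2
      obtain ⟨h3, h4⟩ := ih w h1 h2
      rw [Function.iterate_succ_apply']
      exact hmaps ⟨h3, h4⟩
  have hii : ∀ n : ℕ, ∀ w : ℂ, R < ‖w‖ → |Complex.arg w| < α →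
      ‖f^[n] w - w - (n : ℂ)‖ ≤ (n : ℝ) * Real.sin α := by
    intro n
    induction n with
    | zero => intro w h1 h2; simp
    | succ n ih =>
      intro w h1 h2
      obtain ⟨h3, h4⟩ := hiter n w h1 h2
      have key : f^[n+1] w - w - ((n+1 : ℕ) : ℂ) =
          (f (f^[n] w) - f^[n] w - 1) + (f^[n] w - w - (n : ℂ)) := by
        rw [Function.iterate_succ_apply']
        push_cast
        ring
      rw [key]
      calc ‖_‖ ≤ ‖f (f^[n] w) - f^[n] w - 1‖ +
            ‖f^[n] w - w - (n : ℂ)‖ := norm_add_le _ _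
        _ ≤ Real.sin α + (n : ℝ) * Real.sin α := add_le_add (hf _ h3 h4) (ih w h1 h2)
        _ = ((n+1 : ℕ) : ℝ) * Real.sin α := by push_cast; ring
  refine ⟨hmaps, hii, ?_⟩
  intro n hn w h1 h2
  have hw0 : w ≠ 0 := by
    intro h; rw [h] at h1; simp at h1; linarith
  have hwre : 0 < w.re := by
    have hsect := (stmt12_sector_iff hα hα2 hw0).mp h2
    nlinarith [abs_nonneg w.im]
  have hwn : (n : ℝ) ≤ ‖w + (n : ℂ)‖ := by
    have hre : (w + (n : ℂ)).re = w.re + n := by simp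
    have := Complex.re_le_norm (w + (n : ℂ))
    rw [hre] at this
    linarith
  have htri : ‖w + (n : ℂ)‖ - ‖f^[n] w‖ ≤
      ‖f^[n] w - w - (n : ℂ)‖ := by
    have := norm_sub_norm_le (w + (n : ℂ)) (f^[n] w)
    have heq : w + (n : ℂ) - f^[n] w = -(f^[n] w - w - (n : ℂ)) := by ring
    rw [heq, norm_neg] at this
    linarith
  have hbound := hii n w h1 h2
  have : (n : ℝ) - (n : ℝ) * Real.sin α ≤ ‖f^[n] w‖ := by linarith
  linarith [this, (by ring : (1 - Real.sin α) * (n : ℝ) = (n : ℝ) - (n : ℝ) * Real.sin α)]
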